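/- arXiv:1705.09971 — 2 statements merged into one kernel-verified Lean document; each statement's English description precedes it below -/
import Mathlib

section
/- QUEST quaternion formula: let ρ be a 3×3 real matrix, z ∈ ℝ³, σ ∈ ℝ, and let K be the 4×4 matrix with upper-left block ρ − σI, upper-right column z, lower-left row zᵀ, and lower-right entry σ. Suppose q = (q_v, q_s) ∈ ℝ⁴ with q_s ≠ 0 satisfies K q = λ q, and suppose the 3×3 matrix (σ + λ)I − ρ is invertible. Then the Rodrigues parameter vector p = q_v / q_s satisfies p = ((σ + λ)I − ρ)^{-1} z, equivalently p = −(ρ − (σ + λ)I)^{-1} z. -/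
open Matrix

/-- The Davenport-type 4×4 matrix with upper-left 3×3 block `ρ − σI`, upper-right
column `z`, lower-left row `zᵀ`, and lower-right entry `σ`. -/
def davenportK (ρ : Matrix (Fin 3) (Fin 3) ℝ) (z : Fin 3 → ℝ) (σ : ℝ) :
    Matrix (Fin 3 ⊕ Unit) (Fin 3 ⊕ Unit) ℝ :=
  fromBlocks (ρ - σ • 1) (Matrix.of fun i _ => z i) (Matrix.of fun _ j => z j)
    (Matrix.of fun _ _ => σ)

/-- QUEST quaternion formula: if `q = (q_v, q_s)` with `q_s ≠ 0` satisfies `K q = λ q`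
and `(σ + λ)I − ρ` is invertible, then the Rodrigues parameter vector `p = q_v / q_s`
satisfies `p = ((σ + λ)I − ρ)⁻¹ z`, equivalently `p = −(ρ − (σ + λ)I)⁻¹ z`. -/
theorem quest_rodrigues_formula (ρ : Matrix (Fin 3) (Fin 3) ℝ) (z : Fin 3 → ℝ)
    (σ lam : ℝ) (q : Fin 3 ⊕ Unit → ℝ) (hqs : q (Sum.inr ()) ≠ 0)
    (heig : (davenportK ρ z σ).mulVec q = lam • q)
    (hinv : IsUnit ((σ + lam) • (1 : Matrix (Fin 3) (Fin 3) ℝ) - ρ)) :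
    (q (Sum.inr ()))⁻¹ • (fun i => q (Sum.inl i)) =
        ((σ + lam) • (1 : Matrix (Fin 3) (Fin 3) ℝ) - ρ)⁻¹.mulVec z ∧
    (q (Sum.inr ()))⁻¹ • (fun i => q (Sum.inl i)) =
        -((ρ - (σ + lam) • (1 : Matrix (Fin 3) (Fin 3) ℝ))⁻¹.mulVec z) := by
  set M : Matrix (Fin 3) (Fin 3) ℝ := (σ + lam) • (1 : Matrix (Fin 3) (Fin 3) ℝ) - ρ with hM
  set qs : ℝ := q (Sum.inr ()) with hqsdef
  set qv : Fin 3 → ℝ := fun i => q (Sum.inl i) with hqv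
  -- key linear equation: M.mulVec qv = qs • z
  have hkey : M.mulVec (qs⁻¹ • qv) = z := by
    funext i
    have h1 := congrFun heig (Sum.inl i)
    simp only [davenportK, mulVec, dotProduct, Fintype.sum_sum_type, Finset.univ_unique,
      Finset.sum_singleton, fromBlocks_apply₁₁, fromBlocks_apply₁₂, Matrix.of_apply,
      Pi.smul_apply, smul_eq_mul, Matrix.sub_apply, Matrix.smul_apply, Matrix.one_apply,
      sub_mul, ite_mul, one_mul, zero_mul] at h1
    simp only [hM, mulVec, dotProduct, Pi.smul_apply, smul_eq_mul, Matrix.sub_apply,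
      Matrix.smul_apply, Matrix.one_apply, ite_mul, one_mul, zero_mul, sub_mul, mul_ite,
      mul_zero]
    rw [Finset.sum_sub_distrib] at h1
    rw [Finset.sum_sub_distrib]
    simp only [mul_one, Finset.sum_ite_eq, Finset.mem_univ, if_true]
    have h3 : (∑ x : Fin 3, (σ * if i = x then 1 else 0) * q (Sum.inl x))
        = σ * q (Sum.inl i) := by
      simp [ite_mul]
    rw [h3] at h1
    -- h1 : ∑ j, ρ i j * q (inl j) - σ * q (inl i) + z i * qs = lam * q (inl i)
    have : (σ + lam) * (qs⁻¹ * qv i) - ∑ j, ρ i j * (qs⁻¹ * qv j)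
        = qs⁻¹ * ((σ + lam) * qv i - ∑ j, ρ i j * qv j) := by
      rw [mul_sub, Finset.mul_sum]
      congr 1
      · ring
      · exact Finset.sum_congr rfl fun j _ => by ring
    rw [this]
    have h4 : (σ + lam) * qv i - ∑ j, ρ i j * qv j = qs * z i := by
      simp only [hqv]
      nlinarith [h1]
    rw [h4]
    field_simp
  have hdet : IsUnit M.det := (isUnit_iff_isUnit_det M).mp hinv
  have h1 : qs⁻¹ • qv = M⁻¹.mulVec z := by
    rw [← hkey, Matrix.mulVec_mulVec, Matrix.nonsing_inv_mul M hdet, Matrix.one_mulVec]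
  refine ⟨h1, ?_⟩
  have hneg : ρ - (σ + lam) • (1 : Matrix (Fin 3) (Fin 3) ℝ) = -M := by
    simp [hM]
  have hinvneg : (-M)⁻¹ = -M⁻¹ :=
    Matrix.inv_eq_right_inv (by rw [neg_mul_neg, Matrix.mul_nonsing_inv M hdet])
  rw [hneg, hinvneg, Matrix.neg_mulVec, neg_neg, ← h1]
end

section
/- QUEST characteristic equation: let ρ be a 3×3 real matrix, z ∈ ℝ³, σ ∈ ℝ, and let K be the 4×4 matrix with upper-left block ρ − σI, upper-right column z, lower-left row zᵀ, and lower-right entry σ. If q = (q_v, q_s) ∈ ℝ⁴ with q_s ≠ 0 satisfies K q = λ q and (σ + λ)I − ρ is invertible, then λ satisfies zᵀ ((σ + λ)I − ρ)^{-1} z + σ − λ = 0, equivalently zᵀ (ρ − (σ + λ)I)^{-1} z + λ − σ = 0. -/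
open Matrix

/-- QUEST characteristic equation: if `q = (q_v, q_s)` with `q_s ≠ 0` satisfies
`K q = λ q` and `(σ + λ)I − ρ` is invertible, then `λ` satisfies
`zᵀ ((σ + λ)I − ρ)⁻¹ z + σ − λ = 0`, equivalently
`zᵀ (ρ − (σ + λ)I)⁻¹ z + λ − σ = 0`. -/
theorem quest_characteristic_equation (ρ : Matrix (Fin 3) (Fin 3) ℝ) (z : Fin 3 → ℝ)
    (σ lam : ℝ) (q : Fin 3 ⊕ Unit → ℝ) (hqs : q (Sum.inr ()) ≠ 0)
    (heig : (davenportK ρ z σ).mulVec q = lam • q)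
    (hinv : IsUnit ((σ + lam) • (1 : Matrix (Fin 3) (Fin 3) ℝ) - ρ)) :
    z ⬝ᵥ (((σ + lam) • (1 : Matrix (Fin 3) (Fin 3) ℝ) - ρ)⁻¹.mulVec z) + σ - lam = 0 ∧
    z ⬝ᵥ ((ρ - (σ + lam) • (1 : Matrix (Fin 3) (Fin 3) ℝ))⁻¹.mulVec z) + lam - σ = 0 := by
  set A : Matrix (Fin 3) (Fin 3) ℝ := (σ + lam) • 1 - ρ with hA
  have hdet : IsUnit A.det := (Matrix.isUnit_iff_isUnit_det A).mp hinv
  set qv : Fin 3 → ℝ := fun i => q (Sum.inl i) with hqv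
  set qs : ℝ := q (Sum.inr ()) with hqsdef
  -- row equations
  have h1 : A.mulVec qv = qs • z := by
    funext i
    have h : ∑ x : Fin 3, ρ i x * qv x - σ * qv i + z i * qs = lam * qv i := by
      have h0 := congrFun heig (Sum.inl i)
      simpa [davenportK, mulVec, dotProduct, Fintype.sum_sum_type, fromBlocks,
        Matrix.sub_apply, Matrix.smul_apply, Matrix.one_apply, sub_mul, mul_ite, ite_mul,
        Finset.sum_sub_distrib, Finset.sum_ite_eq, smul_eq_mul] using h0
    simp [A, mulVec, dotProduct, Matrix.sub_apply, Matrix.smul_apply, Matrix.one_apply,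
      sub_mul, Finset.sum_sub_distrib, mul_ite, ite_mul, Finset.sum_ite_eq, smul_eq_mul]
    linarith [h]
  have h2 : z ⬝ᵥ qv + σ * qs = lam * qs := by
    have := congrFun heig (Sum.inr ())
    simpa [davenportK, mulVec, dotProduct, Fintype.sum_sum_type, fromBlocks] using this
  have hqv_eq : qv = qs • A⁻¹.mulVec z := by
    have : A⁻¹.mulVec (A.mulVec qv) = A⁻¹.mulVec (qs • z) := by rw [h1]
    rwa [mulVec_mulVec, Matrix.nonsing_inv_mul A hdet, one_mulVec, mulVec_smul] at this
  have hz : qs * (z ⬝ᵥ A⁻¹.mulVec z) = (lam - σ) * qs := by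
    have : z ⬝ᵥ qv = (lam - σ) * qs := by linarith [h2]
    rw [hqv_eq] at this
    simpa [dotProduct_smul, smul_eq_mul] using this
  have key : z ⬝ᵥ A⁻¹.mulVec z = lam - σ :=
    mul_left_cancel₀ hqs (hz.trans (mul_comm _ qs))
  constructor
  · linarith [key]
  · have hneg : ρ - (σ + lam) • (1 : Matrix (Fin 3) (Fin 3) ℝ) = -A := by simp [hA]
    have hninv : (-A)⁻¹ = -A⁻¹ :=
      Matrix.inv_eq_right_inv (by rw [neg_mul_neg, Matrix.mul_nonsing_inv A hdet])
    rw [hneg, hninv, neg_mulVec, dotProduct_neg, key]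
    ring
end
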